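/- Let (Ω, P) be a probability space, let p ≥ 1, and let X^I : ℤ → Ω → ℝ^{d_I}, X^A : ℤ → Ω → ℝ^{d_A}, X^B : ℤ → Ω → ℝ^{d_B} be square-integrable processes. Let Φ_{j,BA} (d_B×d_A) and Φ_{j,BB} (d_B×d_B) for j = 1, …, p be real matrices, set Φ_BA = ∑_{j=1}^p Φ_{j,BA} and Φ_BB = ∑_{j=1}^p Φ_{j,BB}, and define ε_t = X_t^B − ∑_{j=1}^p Φ_{j,BA} X_{t−j}^A − ∑_{j=1}^p Φ_{j,BB} X_{t−j}^B. Assume: (i) E[ε_t (X_s^I)ᵀ] = 0 for all t, s ∈ ℤ (expectations of matrix products taken entrywise); (ii) there are functions γ_AI, γ_BI : ℤ → Matrix with E[X_t^A (X_{t+k}^I)ᵀ] = γ_AI(k) and E[X_t^B (X_{t+k}^I)ᵀ] = γ_BI(k) for all t, k ∈ ℤ; (iii) γ_AI and γ_BI are summable over ℤ entrywise, and set C_AI = ∑'_{k∈ℤ} γ_AI(k), C_BI = ∑'_{k∈ℤ} γ_BI(k); (iv) I_{d_B} − Φ_BB is invertible. Then C_BI = Φ_BA C_AI + Φ_BB C_BI,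 and hence C_BI = (I_{d_B} − Φ_BB)⁻¹ Φ_BA C_AI. -/

import Mathlib

open MeasureTheory Matrix
open scoped ENNReal

private lemma l2_mul_integrable {Ω : Type*} [MeasurableSpace Ω] {P : Measure Ω}
    {f g : Ω → ℝ} (hf : MemLp f 2 P) (hg : MemLp g 2 P) :
    Integrable (fun ω => f ω * g ω) P := by
  have hpqr : (1 : ℝ≥0∞) / 1 = 1 / 2 + 1 / 2 := by
    simp
    exact ENNReal.inv_two_add_inv_two.symm
  have h : MemLp (f • g) 1 P := by
    haveI : ENNReal.HolderTriple 2 2 1 := ⟨by rw [inv_one]; exact ENNReal.inv_two_add_inv_two⟩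
    exact hg.smul hf
  have := memLp_one_iff_integrable.mp h
  exact this

private lemma tsum_int_shift {f : ℤ → ℝ} (c : ℤ) :
    ∑' k : ℤ, f (k + c) = ∑' k : ℤ, f k :=
  (Equiv.addRight c).tsum_eq f

private lemma summable_int_shift {f : ℤ → ℝ} (hf : Summable f) (c : ℤ) :
    Summable fun k : ℤ => f (k + c) :=
  (Equiv.addRight c).summable_iff.mpr hf

/-- Key identity for instrumental processes in general stationary time series: if
`X_t^B = ∑_j Φ_{j,BA} X_{t-j}^A + ∑_j Φ_{j,BB} X_{t-j}^B + ε_t` with the residual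
`ε` uncorrelated with the instrument process `X^I` at all lags, the integrated
cross-covariances `C_AI, C_BI` exist (shift-invariant and summable lagged
cross-covariances), and `I_{d_B} - Φ_BB` is invertible, then
`C_BI = Φ_BA C_AI + Φ_BB C_BI` and hence `C_BI = (I_{d_B} - Φ_BB)⁻¹ Φ_BA C_AI`. -/
theorem general_time_series_integrated_covariance_identity
    {dI dA dB p : ℕ} (hp : 1 ≤ p)
    {Ω : Type*} [MeasurableSpace Ω] (P : Measure Ω) [IsProbabilityMeasure P]
    (XI : ℤ → Ω → (Fin dI → ℝ)) (XA : ℤ → Ω → (Fin dA → ℝ))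
    (XB : ℤ → Ω → (Fin dB → ℝ))
    (hXIL2 : ∀ t i, MemLp (fun ω => XI t ω i) 2 P)
    (hXAL2 : ∀ t i, MemLp (fun ω => XA t ω i) 2 P)
    (hXBL2 : ∀ t i, MemLp (fun ω => XB t ω i) 2 P)
    (ΦBA : Fin p → Matrix (Fin dB) (Fin dA) ℝ)
    (ΦBB : Fin p → Matrix (Fin dB) (Fin dB) ℝ)
    (ε : ℤ → Ω → (Fin dB → ℝ))
    (hε : ∀ t ω, ε t ω =
      XB t ω - (∑ j : Fin p, (ΦBA j).mulVec (XA (t - ((j : ℕ) + 1)) ω)) -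
        ∑ j : Fin p, (ΦBB j).mulVec (XB (t - ((j : ℕ) + 1)) ω))
    (horth : ∀ t s : ℤ, ∀ (i : Fin dB) (l : Fin dI),
      ∫ ω, ε t ω i * XI s ω l ∂P = 0)
    (γAI : ℤ → Matrix (Fin dA) (Fin dI) ℝ)
    (γBI : ℤ → Matrix (Fin dB) (Fin dI) ℝ)
    (hγAI : ∀ t k : ℤ, ∀ (i : Fin dA) (j : Fin dI),
      ∫ ω, XA t ω i * XI (t + k) ω j ∂P = γAI k i j)
    (hγBI : ∀ t k : ℤ, ∀ (i : Fin dB) (j : Fin dI),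
      ∫ ω, XB t ω i * XI (t + k) ω j ∂P = γBI k i j)
    (hsumAI : ∀ (i : Fin dA) (j : Fin dI), Summable fun k : ℤ => γAI k i j)
    (hsumBI : ∀ (i : Fin dB) (j : Fin dI), Summable fun k : ℤ => γBI k i j)
    (CAI : Matrix (Fin dA) (Fin dI) ℝ)
    (hCAI : CAI = Matrix.of fun i j => ∑' k : ℤ, γAI k i j)
    (CBI : Matrix (Fin dB) (Fin dI) ℝ)
    (hCBI : CBI = Matrix.of fun i j => ∑' k : ℤ, γBI k i j)
    (hBB : IsUnit (1 - ∑ j, ΦBB j).det) :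
    CBI = (∑ j, ΦBA j) * CAI + (∑ j, ΦBB j) * CBI ∧
      CBI = (1 - ∑ j, ΦBB j)⁻¹ * (∑ j, ΦBA j) * CAI := by
  -- Step 1: the lag-wise identity.
  have key : ∀ (k : ℤ) (i : Fin dB) (l : Fin dI),
      γBI k i l =
        (∑ j : Fin p, ∑ a, ΦBA j i a * γAI (k + ((j : ℕ) + 1)) a l) +
        ∑ j : Fin p, ∑ b, ΦBB j i b * γBI (k + ((j : ℕ) + 1)) b l := by
    intro k i l
    have h0 := horth 0 k i l
    have hexp : ∀ ω, ε 0 ω i * XI k ω l =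
        XB 0 ω i * XI k ω l -
        (∑ j : Fin p, ∑ a, ΦBA j i a * (XA (0 - ((j : ℕ) + 1)) ω a * XI k ω l)) -
        ∑ j : Fin p, ∑ b, ΦBB j i b * (XB (0 - ((j : ℕ) + 1)) ω b * XI k ω l) := by
      intro ω
      rw [hε 0 ω]
      simp only [Pi.sub_apply, Finset.sum_apply, Matrix.mulVec, dotProduct, sub_mul,
        Finset.sum_mul, mul_assoc]
    have hintB : Integrable (fun ω => XB 0 ω i * XI k ω l) P :=
      l2_mul_integrable (hXBL2 0 i) (hXIL2 k l)
    have hintSA : Integrable (fun ω => ∑ j : Fin p, ∑ a,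
        ΦBA j i a * (XA (0 - ((j : ℕ) + 1)) ω a * XI k ω l)) P := by
      apply integrable_finset_sum
      intro j _
      apply integrable_finset_sum
      intro a _
      exact (l2_mul_integrable (hXAL2 _ a) (hXIL2 k l)).const_mul _
    have hintSB : Integrable (fun ω => ∑ j : Fin p, ∑ b,
        ΦBB j i b * (XB (0 - ((j : ℕ) + 1)) ω b * XI k ω l)) P := by
      apply integrable_finset_sum
      intro j _
      apply integrable_finset_sum
      intro b _
      exact (l2_mul_integrable (hXBL2 _ b) (hXIL2 k l)).const_mul _
    have hfg : Integrable (fun ω => XB 0 ω i * XI k ω l - ∑ j : Fin p, ∑ a,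
        ΦBA j i a * (XA (0 - ((j : ℕ) + 1)) ω a * XI k ω l)) P := hintB.sub hintSA
    rw [integral_congr_ae (Filter.Eventually.of_forall hexp)] at h0
    rw [integral_sub hfg hintSB, integral_sub hintB hintSA] at h0
    have hIB : ∫ ω, XB 0 ω i * XI k ω l ∂P = γBI k i l := by
      have := hγBI 0 k i l; rwa [zero_add] at this
    have hIA : ∀ (j : Fin p) (a : Fin dA),
        ∫ ω, XA (0 - ((j : ℕ) + 1)) ω a * XI k ω l ∂P = γAI (k + ((j : ℕ) + 1)) a l := by
      intro j a
      have := hγAI (0 - ((j : ℕ) + 1)) (k + ((j : ℕ) + 1)) a l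
      have harg : (0 : ℤ) - ((j : ℕ) + 1) + (k + ((j : ℕ) + 1)) = k := by ring
      rwa [harg] at this
    have hIB' : ∀ (j : Fin p) (b : Fin dB),
        ∫ ω, XB (0 - ((j : ℕ) + 1)) ω b * XI k ω l ∂P = γBI (k + ((j : ℕ) + 1)) b l := by
      intro j b
      have := hγBI (0 - ((j : ℕ) + 1)) (k + ((j : ℕ) + 1)) b l
      have harg : (0 : ℤ) - ((j : ℕ) + 1) + (k + ((j : ℕ) + 1)) = k := by ring
      rwa [harg] at this
    have hI1 : ∫ ω, (∑ j : Fin p, ∑ a,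
        ΦBA j i a * (XA (0 - ((j : ℕ) + 1)) ω a * XI k ω l)) ∂P =
        ∑ j : Fin p, ∑ a, ΦBA j i a * γAI (k + ((j : ℕ) + 1)) a l := by
      rw [integral_finset_sum _ (fun j _ => integrable_finset_sum _ fun a _ =>
        (l2_mul_integrable (hXAL2 _ a) (hXIL2 k l)).const_mul _)]
      refine Finset.sum_congr rfl fun j _ => ?_
      rw [integral_finset_sum _ (fun a _ =>
        (l2_mul_integrable (hXAL2 _ a) (hXIL2 k l)).const_mul _)]
      refine Finset.sum_congr rfl fun a _ => ?_
      rw [integral_const_mul, hIA j a]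
    have hI2 : ∫ ω, (∑ j : Fin p, ∑ b,
        ΦBB j i b * (XB (0 - ((j : ℕ) + 1)) ω b * XI k ω l)) ∂P =
        ∑ j : Fin p, ∑ b, ΦBB j i b * γBI (k + ((j : ℕ) + 1)) b l := by
      rw [integral_finset_sum _ (fun j _ => integrable_finset_sum _ fun b _ =>
        (l2_mul_integrable (hXBL2 _ b) (hXIL2 k l)).const_mul _)]
      refine Finset.sum_congr rfl fun j _ => ?_
      rw [integral_finset_sum _ (fun b _ =>
        (l2_mul_integrable (hXBL2 _ b) (hXIL2 k l)).const_mul _)]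
      refine Finset.sum_congr rfl fun b _ => ?_
      rw [integral_const_mul, hIB' j b]
    rw [hI1, hI2, hIB] at h0
    linarith [h0]
  -- Step 2: sum over k.
  have hCAIe : ∀ a l', CAI a l' = ∑' k : ℤ, γAI k a l' := by
    intro a l'; rw [hCAI]; rfl
  have hCBIe : ∀ b l', CBI b l' = ∑' k : ℤ, γBI k b l' := by
    intro b l'; rw [hCBI]; rfl
  have h1 : CBI = (∑ j, ΦBA j) * CAI + (∑ j, ΦBB j) * CBI := by
    rw [Matrix.sum_mul, Matrix.sum_mul]
    ext i l
    simp only [Matrix.add_apply, Matrix.sum_apply, Matrix.mul_apply]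
    have hterm1 : ∀ (j : Fin p) (a : Fin dA),
        Summable fun k : ℤ => ΦBA j i a * γAI (k + ((j : ℕ) + 1)) a l := fun j a =>
      (summable_int_shift (f := fun k => γAI k a l) (hsumAI a l) _).mul_left _
    have hterm2 : ∀ (j : Fin p) (b : Fin dB),
        Summable fun k : ℤ => ΦBB j i b * γBI (k + ((j : ℕ) + 1)) b l := fun j b =>
      (summable_int_shift (f := fun k => γBI k b l) (hsumBI b l) _).mul_left _
    have hsum1 : Summable fun k : ℤ =>
        ∑ j : Fin p, ∑ a, ΦBA j i a * γAI (k + ((j : ℕ) + 1)) a l :=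
      summable_sum fun j _ => summable_sum fun a _ => hterm1 j a
    have hsum2 : Summable fun k : ℤ =>
        ∑ j : Fin p, ∑ b, ΦBB j i b * γBI (k + ((j : ℕ) + 1)) b l :=
      summable_sum fun j _ => summable_sum fun b _ => hterm2 j b
    have hA : (∑' k : ℤ, ∑ j : Fin p, ∑ a, ΦBA j i a * γAI (k + ((j : ℕ) + 1)) a l)
        = ∑ j : Fin p, ∑ a, ΦBA j i a * CAI a l := by
      rw [Summable.tsum_finsetSum fun j _ => summable_sum fun a _ => hterm1 j a]
      refine Finset.sum_congr rfl fun j _ => ?_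
      rw [Summable.tsum_finsetSum fun a _ => hterm1 j a]
      refine Finset.sum_congr rfl fun a _ => ?_
      rw [tsum_mul_left, hCAIe a l]
      congr 1
      exact tsum_int_shift (f := fun k => γAI k a l) _
    have hB : (∑' k : ℤ, ∑ j : Fin p, ∑ b, ΦBB j i b * γBI (k + ((j : ℕ) + 1)) b l)
        = ∑ j : Fin p, ∑ b, ΦBB j i b * CBI b l := by
      rw [Summable.tsum_finsetSum fun j _ => summable_sum fun b _ => hterm2 j b]
      refine Finset.sum_congr rfl fun j _ => ?_
      rw [Summable.tsum_finsetSum fun b _ => hterm2 j b]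
      refine Finset.sum_congr rfl fun b _ => ?_
      rw [tsum_mul_left, hCBIe b l]
      congr 1
      exact tsum_int_shift (f := fun k => γBI k b l) _
    calc CBI i l = ∑' k : ℤ, γBI k i l := hCBIe i l
      _ = ∑' k : ℤ, ((∑ j : Fin p, ∑ a, ΦBA j i a * γAI (k + ((j : ℕ) + 1)) a l) +
            ∑ j : Fin p, ∑ b, ΦBB j i b * γBI (k + ((j : ℕ) + 1)) b l) :=
          tsum_congr fun k => key k i l
      _ = (∑' k : ℤ, ∑ j : Fin p, ∑ a, ΦBA j i a * γAI (k + ((j : ℕ) + 1)) a l) +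
            ∑' k : ℤ, ∑ j : Fin p, ∑ b, ΦBB j i b * γBI (k + ((j : ℕ) + 1)) b l :=
          Summable.tsum_add hsum1 hsum2
      _ = _ := by rw [hA, hB]
  refine ⟨h1, ?_⟩
  have h2 : (1 - ∑ j, ΦBB j) * CBI = (∑ j, ΦBA j) * CAI := by
    rw [Matrix.sub_mul, Matrix.one_mul, sub_eq_iff_eq_add]
    exact h1
  have h3 : (1 - ∑ j, ΦBB j)⁻¹ * ((1 - ∑ j, ΦBB j) * CBI) = CBI := by
    rw [← Matrix.mul_assoc, Matrix.nonsing_inv_mul _ hBB, Matrix.one_mul]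
  rw [← h3, h2, ← Matrix.mul_assoc]
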